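/- Define b₀ = 0 and bₖ = E_{k−1}(1) for k ≥ 1, where Eₘ(x) is the Euler polynomial. Then for all n ≥ 1, Hₙ(bₖ) = (−1)^{n−1} · (2^{n+1}/n!) · (∑_{j=1}^n (−1)^{j−1}/j) · Hₙ(Eₖ(1)). -/

import Mathlib

/-- The Hankel determinant `Hₙ(c) = det (c_{i+j})_{0 ≤ i,j ≤ n}`. -/
def hankel (c : ℕ → ℚ) (n : ℕ) : ℚ :=
  Matrix.det (Matrix.of fun i j : Fin (n + 1) => c (i.1 + j.1))

/-- Evaluation `Eₙ(x)` of the Euler polynomials, defined by the recurrence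
`Eₙ(x) = xⁿ - (1/2) ∑_{k<n} C(n,k) Eₖ(x)`, equivalent to the generating function
`2e^{xt}/(e^t+1) = ∑ Eₙ(x) tⁿ/n!`. -/
def eulerEval (x : ℚ) : ℕ → ℚ :=
  WellFounded.fix Nat.lt_wfRel.wf fun n E =>
    x ^ n - 2⁻¹ * ∑ k : Fin n, (n.choose k : ℚ) * E k k.2

lemma eulerEval_def (x : ℚ) (n : ℕ) :
    eulerEval x n = x ^ n - 2⁻¹ * ∑ k : Fin n, (n.choose k : ℚ) * eulerEval x k := by
  conv_lhs => rw [eulerEval, WellFounded.fix_eq]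
  rfl

/-- `cc r s = s! · [t^s] tanh(t/2)^r`. -/
def cc : ℕ → ℕ → ℚ
  | 0, 0 => 1
  | _+1, 0 => 0
  | 0, _+1 => 0
  | r+1, s+1 => ((r:ℚ)+1)/2 * (cc r s - cc (r+2) s)
termination_by r s => s

lemma cc_zero_right (r : ℕ) : cc r 0 = if r = 0 then 1 else 0 := by
  cases r <;> simp [cc]

lemma cc_zero_left (s : ℕ) : cc 0 s = if s = 0 then 1 else 0 := by
  cases s <;> simp [cc]

lemma cc_succ (r s : ℕ) : cc (r+1) (s+1) = ((r:ℚ)+1)/2 * (cc r s - cc (r+2) s) := by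
  rw [cc]

lemma cc_eq_zero {r s : ℕ} (h : s < r) : cc r s = 0 := by
  induction s generalizing r with
  | zero => cases r with
    | zero => omega
    | succ r => simp [cc]
  | succ s ih =>
    cases r with
    | zero => omega
    | succ r =>
      rw [cc_succ]
      cases r with
      | zero => omega
      | succ r => rw [ih (by omega), ih (by omega)]; ring

lemma cc_diag (n : ℕ) : cc n n = (n.factorial : ℚ) / 2 ^ n := by
  induction n with
  | zero => simp [cc]
  | succ n ih =>
    rw [cc_succ, ih, cc_eq_zero (by omega), Nat.factorial_succ]
    push_cast
    ring

/-- `dd r s = s! · [t^s] (e^t · tanh(t/2)^r)` (binomial transform of `cc r`). -/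
def dd (r s : ℕ) : ℚ := ∑ k ∈ Finset.range (s+1), (s.choose k : ℚ) * cc r k

lemma dd_zero_right (r : ℕ) : dd r 0 = cc r 0 := by simp [dd]

lemma dd_zero_left (s : ℕ) : dd 0 s = 1 := by
  rw [dd]
  rw [Finset.sum_eq_single 0]
  · simp [cc_zero_left]
  · intro k _ hk; simp [cc_zero_left, hk]
  · intro h; simp at h

lemma dd_succ (r s : ℕ) :
    dd r (s+1) = dd r s + ∑ k ∈ Finset.range (s+1), (s.choose k : ℚ) * cc r (k+1) := by
  rw [dd, Finset.sum_range_succ']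
  have h1 : ∀ k ∈ Finset.range (s+1), ((s+1).choose (k+1) : ℚ) * cc r (k+1)
      = (s.choose k : ℚ) * cc r (k+1) + (s.choose (k+1) : ℚ) * cc r (k+1) := by
    intro k _
    rw [Nat.choose_succ_succ]
    push_cast
    ring
  rw [Finset.sum_congr rfl h1, Finset.sum_add_distrib]
  have h2 : ∑ k ∈ Finset.range (s+1), (s.choose (k+1) : ℚ) * cc r (k+1)
      = dd r s - cc r 0 := by
    rw [Finset.sum_range_succ, Nat.choose_eq_zero_of_lt (by omega), dd,
      Finset.sum_range_succ']
    simp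
  rw [h2]
  simp
  ring

lemma dd_rec (r s : ℕ) :
    dd (r+1) (s+1) = dd (r+1) s + ((r:ℚ)+1)/2 * (dd r s - dd (r+2) s) := by
  rw [dd_succ]
  have h1 : ∀ k ∈ Finset.range (s+1), (s.choose k : ℚ) * cc (r+1) (k+1)
      = ((r:ℚ)+1)/2 * ((s.choose k : ℚ) * cc r k) -
        ((r:ℚ)+1)/2 * ((s.choose k : ℚ) * cc (r+2) k) := by
    intro k _
    rw [cc_succ]
    ring
  rw [Finset.sum_congr rfl h1, Finset.sum_sub_distrib, ← Finset.mul_sum, ← Finset.mul_sum]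
  rw [← dd, ← dd]
  ring

/-- The key "chain" identity, encoding `(e^t+1)·w^{r+1} = (e^t-1)·w^r` for `w = tanh(t/2)`. -/
lemma chain (s : ℕ) : ∀ r : ℕ, dd (r+1) s + cc (r+1) s = dd r s - cc r s := by
  induction s with
  | zero =>
    intro r
    rw [dd_zero_right, dd_zero_right, cc_zero_right]
    simp [cc_zero_right]
  | succ s ih =>
    intro r
    cases r with
    | zero =>
      rw [dd_rec 0 s, cc_succ 0 s, dd_zero_left, dd_zero_left, cc_zero_left (s+1)]
      simp only [Nat.succ_ne_zero, if_false]
      have i0 := ih 0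
      have i1 := ih 1
      rw [dd_zero_left] at i0
      push_cast at *
      linear_combination (1/2:ℚ) * i0 - (1/2:ℚ) * i1
    | succ r =>
      have e1 := dd_rec (r+1) s
      have e2 := cc_succ (r+1) s
      have e3 := dd_rec r s
      have e4 := cc_succ r s
      have i1 := ih r
      have i2 := ih (r+1)
      have i3 := ih (r+2)
      rw [e1, e2, e3, e4]
      push_cast at *
      linear_combination ((r:ℚ)+1)/2 * i1 + (1/2:ℚ) * i2 - ((r:ℚ)+2)/2 * i3

def mm (k : ℕ) : ℚ := eulerEval 1 k

def bseq (k : ℕ) : ℚ := if k = 0 then 0 else eulerEval 1 (k - 1)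

lemma bseq_succ (k : ℕ) : bseq (k+1) = mm k := by simp [bseq, mm]

lemma mm_eq (s : ℕ) : mm s = cc 0 s + cc 1 s := by
  induction s using Nat.strong_induction_on with
  | _ s ih =>
    rw [mm, eulerEval_def, one_pow]
    have hsum : ∑ k : Fin s, (s.choose k : ℚ) * eulerEval 1 k
        = ∑ k ∈ Finset.range s, (s.choose k : ℚ) * (cc 0 k + cc 1 k) := by
      rw [Finset.sum_range (n := s)]
      exact Finset.sum_congr rfl fun k _ => by rw [← mm, ih k k.2]
    rw [hsum]
    cases s with
    | zero => simp [cc_zero_right]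
    | succ s =>
      have t0 : ∑ k ∈ Finset.range (s+1), ((s+1).choose k : ℚ) * cc 0 k
          = dd 0 (s+1) - cc 0 (s+1) := by
        rw [dd, Finset.sum_range_succ (n := s+1), Nat.choose_self]; push_cast; ring
      have t1 : ∑ k ∈ Finset.range (s+1), ((s+1).choose k : ℚ) * cc 1 k
          = dd 1 (s+1) - cc 1 (s+1) := by
        rw [dd, Finset.sum_range_succ (n := s+1), Nat.choose_self]; push_cast; ring
      have hsplit : ∑ k ∈ Finset.range (s+1), ((s+1).choose k : ℚ) * (cc 0 k + cc 1 k)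
          = (dd 0 (s+1) - cc 0 (s+1)) + (dd 1 (s+1) - cc 1 (s+1)) := by
        rw [← t0, ← t1, ← Finset.sum_add_distrib]
        exact Finset.sum_congr rfl fun k _ => by ring
      rw [hsplit, dd_zero_left]
      have hc := chain (s+1) 0
      rw [dd_zero_left] at hc
      norm_num at hc ⊢
      linear_combination (-1/2 : ℚ) * hc

def PPshift (f : ℕ → ℚ) : ℕ → ℚ
  | 0 => 0
  | k+1 => f k

/-- Coefficients of the monic orthogonal polynomials
`p₀ = 1`, `p₁ = X - 1/2`, `p_{n+2} = (X - 1/2)·p_{n+1} + ((n+1)²/4)·pₙ`. -/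
def PP : ℕ → ℕ → ℚ
  | 0 => fun k => if k = 0 then 1 else 0
  | 1 => fun k => if k = 0 then -(1/2) else if k = 1 then 1 else 0
  | n+2 => fun k => PPshift (PP (n+1)) k - (1/2) * PP (n+1) k + (((n:ℚ)+1)^2/4) * PP n k

lemma PP_two (n : ℕ) (k : ℕ) : PP (n+2) k
    = PPshift (PP (n+1)) k - (1/2) * PP (n+1) k + (((n:ℚ)+1)^2/4) * PP n k := rfl

lemma PP_deg : ∀ n k : ℕ, n < k → PP n k = 0 := by
  intro n
  induction n using Nat.strong_induction_on with
  | _ n ih =>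
    match n with
    | 0 => intro k hk; simp [PP]; omega
    | 1 => intro k hk; simp only [PP]; rw [if_neg (by omega), if_neg (by omega)]
    | (m+2) =>
      intro k hk
      rw [PP_two]
      match k, hk with
      | k+1, hk =>
        simp only [PPshift]
        rw [ih (m+1) (by omega) k (by omega), ih (m+1) (by omega) (k+1) (by omega),
          ih m (by omega) (k+1) (by omega)]
        ring

lemma PP_diag : ∀ n : ℕ, PP n n = 1 := by
  intro n
  induction n using Nat.strong_induction_on with
  | _ n ih =>
    match n with
    | 0 => simp [PP]
    | 1 => simp [PP]
    | (m+2) =>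
      rw [PP_two]
      simp only [PPshift]
      rw [ih (m+1) (by omega), PP_deg (m+1) (m+2) (by omega), PP_deg m (m+2) (by omega)]
      ring

def gam (n : ℕ) : ℚ := (-1)^n * (n.factorial : ℚ) / 2^n

def hh (n : ℕ) : ℚ := (-1)^n * (gam n)^2

def As (n : ℕ) : ℚ := ∑ j ∈ Finset.range n, (-1)^j / ((j:ℚ)+1)

def al (n : ℕ) : ℚ := -2 * gam n * As n

lemma gam_succ (n : ℕ) : gam (n+1) = -((n:ℚ)+1)/2 * gam n := by
  simp only [gam, Nat.factorial_succ, pow_succ]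
  push_cast
  ring

lemma gam_ne_zero (n : ℕ) : gam n ≠ 0 := by
  simp only [gam]
  apply div_ne_zero
  · exact mul_ne_zero (pow_ne_zero _ (by norm_num)) (by positivity)
  · positivity

lemma hh_ne_zero (n : ℕ) : hh n ≠ 0 := by
  simp only [hh]
  exact mul_ne_zero (pow_ne_zero _ (by norm_num)) (pow_ne_zero _ (gam_ne_zero n))

lemma As_succ (n : ℕ) : As (n+1) = As n + (-1)^n / ((n:ℚ)+1) :=
  Finset.sum_range_succ _ n

lemma sum_PP_ext (n N : ℕ) (h : n + 1 ≤ N) (f : ℕ → ℚ) :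
    ∑ k ∈ Finset.range N, PP n k * f k = ∑ k ∈ Finset.range (n+1), PP n k * f k := by
  symm
  apply Finset.sum_subset
  · intro x hx
    simp only [Finset.mem_range] at *
    omega
  · intro x _ hx
    simp only [Finset.mem_range, not_lt] at hx
    rw [PP_deg n x (by omega), zero_mul]

lemma sum_shift (f : ℕ → ℚ) (g : ℕ → ℚ) (N : ℕ) :
    ∑ k ∈ Finset.range (N+1), PPshift f k * g k = ∑ k ∈ Finset.range N, f k * g (k+1) := by
  rw [Finset.sum_range_succ']
  simp [PPshift]

/-- `L(pₙ · xˢ)` where `L` is the Euler moment functional. -/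
def RR (n s : ℕ) : ℚ := ∑ k ∈ Finset.range (n+1), PP n k * mm (k+s)

lemma RR_eq : ∀ n s : ℕ, RR n s = gam n * (cc n s + cc (n+1) s) := by
  intro n
  induction n using Nat.strong_induction_on with
  | _ n ih =>
    match n with
    | 0 =>
      intro s
      simp only [RR, Finset.range_one, Finset.sum_singleton, PP, if_pos rfl, one_mul,
        zero_add, gam, pow_zero, Nat.factorial_zero]
      rw [mm_eq]
      norm_num
    | 1 =>
      intro s
      have : RR 1 s = -(1/2) * mm s + mm (1+s) := by
        simp [RR, Finset.sum_range_succ, PP]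
      rw [this, mm_eq, mm_eq]
      have h1s : cc 0 (1+s) = 0 := by rw [cc_zero_left]; simp
      have h2 : cc 1 (1+s) = (1/2 : ℚ) * (cc 0 s - cc 2 s) := by
        rw [Nat.add_comm 1 s, cc_succ 0 s]; norm_num
      rw [h1s, h2, gam_succ]
      simp only [gam, pow_zero, Nat.factorial_zero]
      norm_num
      ring
    | (m+2) =>
      intro s
      have expand : RR (m+2) s = RR (m+1) (s+1) - (1/2) * RR (m+1) s
          + (((m:ℚ)+1)^2/4) * RR m s := by
        simp only [RR]
        have e1 : ∑ k ∈ Finset.range (m+3), PP (m+2) k * mm (k+s)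
            = ∑ k ∈ Finset.range (m+3), (PPshift (PP (m+1)) k * mm (k+s)
              - (1/2) * (PP (m+1) k * mm (k+s))
              + (((m:ℚ)+1)^2/4) * (PP m k * mm (k+s))) := by
          exact Finset.sum_congr rfl fun k _ => by rw [PP_two]; ring
        rw [e1]
        rw [Finset.sum_add_distrib, Finset.sum_sub_distrib, ← Finset.mul_sum, ← Finset.mul_sum]
        rw [sum_shift (PP (m+1)) (fun k => mm (k+s)) (m+2)]
        rw [sum_PP_ext (m+1) (m+3) (by omega), sum_PP_ext m (m+3) (by omega)]
        have : ∀ k, mm (k + 1 + s) = mm (k + (s+1)) := fun k => by ring_nf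
        rw [Finset.sum_congr rfl fun k _ => by rw [this k]]
      rw [expand, ih (m+1) (by omega), ih (m+1) (by omega), ih m (by omega)]
      have c1 : cc (m+1) (s+1) = ((m:ℚ)+1)/2 * (cc m s - cc (m+2) s) := by
        have := cc_succ m s; push_cast at this ⊢; linarith
      have c2 : cc (m+2) (s+1) = ((m:ℚ)+2)/2 * (cc (m+1) s - cc (m+3) s) := by
        have := cc_succ (m+1) s; push_cast at this ⊢; linarith
      rw [c1, c2, gam_succ (m+1), gam_succ m]
      push_cast
      ring

lemma PP_zero : ∀ n : ℕ, PP n 0 = gam n := by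
  intro n
  induction n using Nat.strong_induction_on with
  | _ n ih =>
    match n with
    | 0 => simp [PP, gam]
    | 1 => simp [PP, gam_succ, gam]; norm_num
    | (m+2) =>
      rw [PP_two]
      simp only [PPshift]
      rw [ih (m+1) (by omega), ih m (by omega), gam_succ (m+1), gam_succ m]
      push_cast
      ring

/-- `L'(pₙ)` where `L'` is the shifted functional. -/
def aa (n : ℕ) : ℚ := ∑ k ∈ Finset.range (n+1), PP n k * bseq k

lemma aa_eq : ∀ n : ℕ, aa n = al n := by
  intro n
  induction n using Nat.strong_induction_on with
  | _ n ih =>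
    match n with
    | 0 => simp [aa, al, As, PP, bseq]
    | 1 =>
      have h0 : mm 0 = 1 := by rw [mm_eq]; simp [cc]
      have ha : aa 1 = mm 0 := by
        rw [aa, Finset.sum_range_succ, Finset.sum_range_succ, Finset.sum_range_zero, bseq_succ]
        norm_num [PP, bseq]
      rw [ha, h0, al, gam_succ]
      simp [As, Finset.sum_range_one, gam]
      norm_num
    | (m+2) =>
      have expand : aa (m+2) = RR (m+1) 0 - (1/2) * aa (m+1)
          + (((m:ℚ)+1)^2/4) * aa m := by
        simp only [aa, RR]
        have e1 : ∑ k ∈ Finset.range (m+3), PP (m+2) k * bseq k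
            = ∑ k ∈ Finset.range (m+3), (PPshift (PP (m+1)) k * bseq k
              - (1/2) * (PP (m+1) k * bseq k)
              + (((m:ℚ)+1)^2/4) * (PP m k * bseq k)) := by
          exact Finset.sum_congr rfl fun k _ => by rw [PP_two]; ring
        rw [e1]
        rw [Finset.sum_add_distrib, Finset.sum_sub_distrib, ← Finset.mul_sum, ← Finset.mul_sum]
        rw [sum_shift (PP (m+1)) bseq (m+2)]
        rw [sum_PP_ext (m+1) (m+3) (by omega), sum_PP_ext m (m+3) (by omega)]
        have : ∀ k ∈ Finset.range (m+2), PP (m+1) k * bseq (k+1) = PP (m+1) k * mm (k+0) := by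
          intro k _; rw [bseq_succ]; norm_num
        rw [Finset.sum_congr rfl this]
      rw [expand, RR_eq (m+1) 0, ih (m+1) (by omega), ih m (by omega)]
      have z1 : cc (m+1) 0 = 0 := by rw [cc_zero_right]; simp
      have z2 : cc (m+2) 0 = 0 := by rw [cc_zero_right]; simp
      rw [z1, z2]
      simp only [al, As_succ, gam_succ]
      push_cast
      field_simp
      ring

/-- Wronskian / Casorati identity. -/
lemma wronsk (n : ℕ) : gam n * al (n+1) - gam (n+1) * al n = hh n := by
  simp only [al, As_succ, gam_succ, hh]
  have hne : ((n:ℚ)+1) ≠ 0 := by positivity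
  field_simp
  ring

lemma neg_one_pow_mul_self (m : ℕ) : ((-1:ℚ))^m * (-1)^m = 1 := by
  rw [← pow_add, ← two_mul, pow_mul]
  norm_num

lemma key_inner (i l N : ℕ) (hi : i + 1 ≤ N) :
    ∑ k ∈ Finset.range N, PP i k * bseq (k+l) = if l = 0 then aa i else RR i (l-1) := by
  rcases l with _ | l
  · rw [if_pos rfl, sum_PP_ext i N hi, aa]
    simp
  · rw [if_neg (Nat.succ_ne_zero l), sum_PP_ext i N hi]
    simp only [Nat.add_sub_cancel, RR]
    refine Finset.sum_congr rfl fun k _ => ?_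
    rw [show k + (l+1) = (k+l)+1 by ring, bseq_succ]

lemma key_b (i j N : ℕ) (hj : j ≤ i) (hiN : i + 1 ≤ N) :
    ∑ l ∈ Finset.range N, (∑ k ∈ Finset.range N, PP i k * bseq (k+l)) * PP j l
      = gam j * al i := by
  rw [Finset.sum_congr rfl fun l _ => by rw [key_inner i l N hiN]]
  obtain ⟨N', rfl⟩ : ∃ N', N = N'+1 := ⟨N-1, by omega⟩
  rw [Finset.sum_range_succ']
  simp only [Nat.succ_ne_zero, if_false, if_pos rfl, Nat.add_sub_cancel]
  have hz : ∀ l ∈ Finset.range N', RR i l * PP j (l+1) = 0 := by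
    intro l _
    rcases lt_or_ge l i with h | h
    · rw [RR_eq, cc_eq_zero h, cc_eq_zero (by omega)]
      simp
    · rw [PP_deg j (l+1) (by omega), mul_zero]
  rw [Finset.sum_eq_zero hz, PP_zero, aa_eq, zero_add, if_pos trivial]
  ring

lemma RR_diag (i : ℕ) : RR i i = hh i := by
  rw [RR_eq, cc_diag, cc_eq_zero (Nat.lt_succ_self i), add_zero, hh]
  have e2 : ((-1:ℚ))^(i*2) = 1 := by rw [mul_comm i 2, pow_mul]; norm_num
  have e3 : ((-1:ℚ))^(i*3) = (-1:ℚ)^i := by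
    rw [pow_mul, pow_succ, ← pow_mul, e2, one_mul]
  simp only [gam]
  field_simp
  ring_nf
  rw [e2]

lemma key_m (i j N : ℕ) (hj : j ≤ i) (hiN : i + 1 ≤ N) :
    ∑ l ∈ Finset.range N, (∑ k ∈ Finset.range N, PP i k * mm (k+l)) * PP j l
      = if j = i then hh i else 0 := by
  rw [Finset.sum_congr rfl fun l _ => by rw [sum_PP_ext i N hiN, ← RR]]
  rcases eq_or_lt_of_le hj with rfl | hlt
  · rw [if_pos rfl, Finset.sum_eq_single j]
    · rw [RR_diag, PP_diag, mul_one]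
    · intro l _ hl
      rcases lt_or_ge l j with h | h
      · rw [RR_eq, cc_eq_zero h, cc_eq_zero (by omega)]; simp
      · rw [PP_deg j l (by omega), mul_zero]
    · intro h
      exact absurd (Finset.mem_range.mpr (by omega)) h
  · rw [if_neg (by omega)]
    refine Finset.sum_eq_zero fun l _ => ?_
    rcases lt_or_ge l i with h | h
    · rw [RR_eq, cc_eq_zero h, cc_eq_zero (by omega)]; simp
    · rw [PP_deg j l (by omega), mul_zero]

lemma gam_zero : gam 0 = 1 := by simp [gam]

lemma al_zero : al 0 = 0 := by simp [al, As]

lemma key_sym (F : ℕ → ℚ) (I J N : ℕ) :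
    ∑ l ∈ Finset.range N, (∑ k ∈ Finset.range N, PP I k * F (k+l)) * PP J l
      = ∑ l ∈ Finset.range N, (∑ k ∈ Finset.range N, PP J k * F (k+l)) * PP I l := by
  simp_rw [Finset.sum_mul]
  rw [Finset.sum_comm]
  refine Finset.sum_congr rfl fun x _ => Finset.sum_congr rfl fun y _ => ?_
  rw [Nat.add_comm x y]
  ring

open Matrix

section Mats

variable (n : ℕ)

def Amat : Matrix (Fin (n+1)) (Fin (n+1)) ℚ := Matrix.of fun i k => PP i.1 k.1

def Gmat : Matrix (Fin (n+1)) (Fin (n+1)) ℚ :=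
  Matrix.of fun i j => gam (min i.1 j.1) * al (max i.1 j.1)

lemma conj_entry (c : ℕ → ℚ) (i j : Fin (n+1)) :
    (Amat n * (Matrix.of fun i j : Fin (n+1) => c (i.1 + j.1)) * (Amat n)ᵀ) i j
      = ∑ l ∈ Finset.range (n+1),
          (∑ k ∈ Finset.range (n+1), PP i.1 k * c (k + l)) * PP j.1 l := by
  simp only [Matrix.mul_apply, Matrix.transpose_apply, Amat, Matrix.of_apply]
  rw [Fin.sum_univ_eq_sum_range
    (fun l => (∑ k : Fin (n+1), PP i.1 k.1 * c (k.1 + l)) * PP j.1 l)]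
  refine Finset.sum_congr rfl fun l _ => ?_
  rw [Fin.sum_univ_eq_sum_range (fun k => PP i.1 k * c (k + l))]

lemma Amat_det : (Amat n).det = 1 := by
  have ht : (Amat n).BlockTriangular OrderDual.toDual := by
    intro i j h
    exact PP_deg i.1 j.1 h
  rw [Matrix.det_of_lowerTriangular _ ht]
  rw [Finset.prod_congr rfl fun i _ => (by exact PP_diag i.1 : Amat n i i = 1)]
  exact Finset.prod_const_one

lemma conjB : Amat n * (Matrix.of fun i j : Fin (n+1) => bseq (i.1 + j.1)) * (Amat n)ᵀ
    = Gmat n := by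
  ext i j
  rw [conj_entry]
  show _ = gam (min i.1 j.1) * al (max i.1 j.1)
  rcases le_total j.1 i.1 with h | h
  · rw [key_b i.1 j.1 (n+1) h (by omega), min_eq_right h, max_eq_left h]
  · rw [key_sym bseq i.1 j.1 (n+1), key_b j.1 i.1 (n+1) h (by omega),
      min_eq_left h, max_eq_right h]

lemma conjM : Amat n * (Matrix.of fun i j : Fin (n+1) => mm (i.1 + j.1)) * (Amat n)ᵀ
    = Matrix.diagonal (fun i : Fin (n+1) => hh i.1) := by
  ext i j
  rw [conj_entry]
  rcases le_total j.1 i.1 with h | h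
  · rw [key_m i.1 j.1 (n+1) h (by omega)]
    by_cases hij : j = i
    · subst hij; simp
    · rw [if_neg (fun hv => hij (Fin.ext hv)),
        Matrix.diagonal_apply_ne _ (fun e => hij e.symm)]
  · rw [key_sym mm i.1 j.1 (n+1), key_m j.1 i.1 (n+1) h (by omega)]
    by_cases hij : i = j
    · subst hij; simp
    · rw [if_neg (fun hv => hij (Fin.ext hv)), Matrix.diagonal_apply_ne _ hij]

end Mats

lemma sum_single_val {n : ℕ} (f : Fin (n+1) → ℚ) (t : ℕ) (ht : t ≤ n) :
    ∑ k : Fin (n+1), (if k.1 = t then f k else 0) = f ⟨t, by omega⟩ := by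
  rw [Finset.sum_eq_single ⟨t, by omega⟩]
  · rw [if_pos rfl]
  · intro k _ hk
    exact if_neg (fun hv => hk (Fin.ext hv))
  · intro hmem; exact absurd (Finset.mem_univ _) hmem

lemma sum_single_val_none {n : ℕ} (f : Fin (n+1) → ℚ) (t : ℕ) (ht : n < t) :
    ∑ k : Fin (n+1), (if k.1 = t then f k else 0) = 0 :=
  Finset.sum_eq_zero fun k _ => if_neg (by omega)

section Mats2

variable (n : ℕ)

def E1mat : Matrix (Fin (n+1)) (Fin (n+1)) ℚ :=
  Matrix.of fun i k => if i = k then 1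
    else if i.1 = k.1 + 1 then -(gam i.1 / gam k.1) else 0

def Fmat : Matrix (Fin (n+1)) (Fin (n+1)) ℚ :=
  Matrix.of fun i j => if i.1 = 0 then al j.1
    else if j.1 < i.1 then hh (i.1 - 1) / gam (i.1 - 1) * gam j.1 else 0

def E2mat : Matrix (Fin (n+1)) (Fin (n+1)) ℚ :=
  Matrix.of fun i k => if i = k then 1
    else if i.1 = k.1 + 1 ∧ 2 ≤ i.1
      then -((hh (i.1-1) / gam (i.1-1)) / (hh (i.1-2) / gam (i.1-2))) else 0

def Wmat : Matrix (Fin (n+1)) (Fin (n+1)) ℚ :=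
  Matrix.of fun i j => if i.1 = 0 then al j.1
    else if i.1 = j.1 + 1 then hh (i.1-1) else 0

def E3mat : Matrix (Fin (n+1)) (Fin (n+1)) ℚ :=
  Matrix.of fun i k => if i = k then 1
    else if i.1 = 0 ∧ 1 ≤ k.1 then -(al (k.1-1) / hh (k.1-1)) else 0

def Dmat : Matrix (Fin (n+1)) (Fin (n+1)) ℚ :=
  Matrix.diagonal (fun j : Fin (n+1) => if j.1 = n then al n else hh j.1)

lemma E1_mul0 (M : Matrix (Fin (n+1)) (Fin (n+1)) ℚ) (i j : Fin (n+1)) (hi : i.1 = 0) :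
    (E1mat n * M) i j = M i j := by
  rw [Matrix.mul_apply, Finset.sum_eq_single i]
  · simp [E1mat]
  · intro k _ hk
    simp only [E1mat, Matrix.of_apply]
    rw [if_neg (fun e => hk e.symm), if_neg (by omega), zero_mul]
  · intro hmem; exact absurd (Finset.mem_univ _) hmem

lemma E1_mul (M : Matrix (Fin (n+1)) (Fin (n+1)) ℚ) (i j : Fin (n+1)) (t : ℕ)
    (hi : i.1 = t + 1) :
    (E1mat n * M) i j = M i j - gam (t+1) / gam t * M ⟨t, by omega⟩ j := by
  rw [Matrix.mul_apply]
  have expand : ∀ k : Fin (n+1), E1mat n i k * M k j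
      = (if k = i then M k j else 0) + (if k.1 = t then -(gam (t+1) / gam t) * M k j else 0) := by
    intro k
    simp only [E1mat, Matrix.of_apply]
    by_cases h1 : i = k
    · subst h1
      rw [if_pos rfl, if_pos rfl, if_neg (by omega), one_mul, add_zero]
    · rw [if_neg h1, if_neg (fun e : k = i => h1 e.symm)]
      by_cases h2 : k.1 = t
      · rw [if_pos (show i.1 = k.1 + 1 by omega), if_pos h2, hi, h2, zero_add]
      · rw [if_neg (show ¬ i.1 = k.1 + 1 by omega), if_neg h2, zero_mul, add_zero]
  rw [Finset.sum_congr rfl fun k _ => expand k, Finset.sum_add_distrib]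
  rw [Finset.sum_ite_eq' Finset.univ i (fun k => M k j), if_pos (Finset.mem_univ i)]
  rw [sum_single_val (fun k => -(gam (t+1) / gam t) * M k j) t (by omega)]
  ring

lemma E2_mul01 (M : Matrix (Fin (n+1)) (Fin (n+1)) ℚ) (i j : Fin (n+1)) (hi : i.1 ≤ 1) :
    (E2mat n * M) i j = M i j := by
  rw [Matrix.mul_apply, Finset.sum_eq_single i]
  · simp [E2mat]
  · intro k _ hk
    simp only [E2mat, Matrix.of_apply]
    rw [if_neg (fun e => hk e.symm), if_neg (by omega), zero_mul]
  · intro hmem; exact absurd (Finset.mem_univ _) hmem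

lemma E2_mul (M : Matrix (Fin (n+1)) (Fin (n+1)) ℚ) (i j : Fin (n+1)) (t : ℕ)
    (hi : i.1 = t + 2) :
    (E2mat n * M) i j = M i j
      - (hh (t+1) / gam (t+1)) / (hh t / gam t) * M ⟨t+1, by omega⟩ j := by
  rw [Matrix.mul_apply]
  have expand : ∀ k : Fin (n+1), E2mat n i k * M k j
      = (if k = i then M k j else 0)
        + (if k.1 = t+1 then -((hh (t+1) / gam (t+1)) / (hh t / gam t)) * M k j else 0) := by
    intro k
    simp only [E2mat, Matrix.of_apply]
    by_cases h1 : i = k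
    · subst h1
      rw [if_pos rfl, if_pos rfl, if_neg (by omega), one_mul, add_zero]
    · rw [if_neg h1, if_neg (fun e : k = i => h1 e.symm)]
      by_cases h2 : k.1 = t+1
      · rw [if_pos (show i.1 = k.1 + 1 ∧ 2 ≤ i.1 by omega), if_pos h2, hi, zero_add]
        norm_num
      · rw [if_neg (show ¬ (i.1 = k.1 + 1 ∧ 2 ≤ i.1) by omega), if_neg h2, zero_mul, add_zero]
  rw [Finset.sum_congr rfl fun k _ => expand k, Finset.sum_add_distrib]
  rw [Finset.sum_ite_eq' Finset.univ i (fun k => M k j), if_pos (Finset.mem_univ i)]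
  rw [sum_single_val (fun k => -((hh (t+1) / gam (t+1)) / (hh t / gam t)) * M k j) (t+1)
    (by omega)]
  ring

lemma E3_mul_pos (M : Matrix (Fin (n+1)) (Fin (n+1)) ℚ) (i j : Fin (n+1)) (hi : 1 ≤ i.1) :
    (E3mat n * M) i j = M i j := by
  rw [Matrix.mul_apply, Finset.sum_eq_single i]
  · simp [E3mat]
  · intro k _ hk
    simp only [E3mat, Matrix.of_apply]
    rw [if_neg (fun e => hk e.symm), if_neg (by omega), zero_mul]
  · intro hmem; exact absurd (Finset.mem_univ _) hmem

end Mats2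

lemma E1G (n : ℕ) : E1mat n * Gmat n = Fmat n := by
  ext i j
  by_cases h0 : i.1 = 0
  · rw [E1_mul0 n _ i j h0]
    simp only [Gmat, Fmat, Matrix.of_apply, if_pos h0]
    rw [min_eq_left (by omega), max_eq_right (by omega), h0, gam_zero, one_mul]
  · obtain ⟨t, ht⟩ : ∃ t, i.1 = t + 1 := ⟨i.1 - 1, by omega⟩
    rw [E1_mul n (Gmat n) i j t ht]
    simp only [Gmat, Fmat, Matrix.of_apply, if_neg h0]
    rcases le_or_gt i.1 j.1 with hij | hij
    · rw [if_neg (by omega)]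
      rw [min_eq_left hij, max_eq_right hij, min_eq_left (by omega),
        max_eq_right (by omega), ht]
      have := gam_ne_zero t
      field_simp
      ring
    · rw [if_pos hij, ht]
      rw [min_eq_right (by omega), max_eq_left (by omega), min_eq_right (by omega),
        max_eq_left (by omega)]
      simp only [Nat.add_sub_cancel]
      have hw := wronsk t
      have hg := gam_ne_zero t
      field_simp
      linear_combination gam j.1 * hw

lemma E2F (n : ℕ) : E2mat n * Fmat n = Wmat n := by
  ext i j
  by_cases h0 : i.1 ≤ 1
  · rw [E2_mul01 n _ i j h0]
    simp only [Fmat, Wmat, Matrix.of_apply]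
    by_cases hz : i.1 = 0
    · rw [if_pos hz, if_pos hz]
    · have h1 : i.1 = 1 := by omega
      rw [if_neg hz, if_neg hz, h1]
      by_cases hj : j.1 = 0
      · rw [if_pos (by omega), if_pos (by omega)]
        norm_num [hj, gam_zero]
      · rw [if_neg (by omega), if_neg (by omega)]
  · obtain ⟨t, ht⟩ : ∃ t, i.1 = t + 2 := ⟨i.1 - 2, by omega⟩
    rw [E2_mul n (Fmat n) i j t ht]
    have Ft : Fmat n (⟨t+1, by omega⟩ : Fin (n+1)) j
        = if j.1 < t+1 then hh t / gam t * gam j.1 else 0 := by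
      simp only [Fmat, Matrix.of_apply]
      norm_num
    have Fi : Fmat n i j = if j.1 < t+2 then hh (t+1) / gam (t+1) * gam j.1 else 0 := by
      simp only [Fmat, Matrix.of_apply, ht]
      rw [if_neg (show ¬ t+2 = 0 by omega), Nat.succ_sub_one]
    have Wi : Wmat n i j = if t+2 = j.1 + 1 then hh (t+1) else 0 := by
      simp only [Wmat, Matrix.of_apply, ht]
      rw [if_neg (show ¬ t+2 = 0 by omega), Nat.succ_sub_one]
    rw [Fi, Ft, Wi]
    rcases lt_trichotomy j.1 (t+1) with hj | hj | hj
    · rw [if_pos (show j.1 < t+2 by omega), if_pos hj,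
        if_neg (show ¬ t+2 = j.1+1 by omega)]
      have h1 := gam_ne_zero t
      have h2 := hh_ne_zero t
      have h3 := gam_ne_zero (t+1)
      field_simp
      ring
    · rw [if_pos (show j.1 < t+2 by omega), if_neg (show ¬ j.1 < t+1 by omega),
        if_pos (show t+2 = j.1+1 by omega), hj, mul_zero, sub_zero]
      have := gam_ne_zero (t+1)
      field_simp
    · rw [if_neg (show ¬ j.1 < t+2 by omega), if_neg (show ¬ j.1 < t+1 by omega),
        if_neg (show ¬ t+2 = j.1+1 by omega), mul_zero, sub_zero]

lemma E3W (n : ℕ) : E3mat n * Wmat n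
    = (Dmat n).submatrix ((finRotate (n+1))⁻¹ : Equiv.Perm (Fin (n+1))) id := by
  ext i j
  rw [Matrix.submatrix_apply, id_eq]
  by_cases h0 : i.1 = 0
  · -- row 0
    rw [Matrix.mul_apply]
    have expand : ∀ k : Fin (n+1), E3mat n i k * Wmat n k j
        = (if k = i then al j.1 else 0) + (if k.1 = j.1 + 1 then -(al j.1) else 0) := by
      intro k
      simp only [E3mat, Wmat, Matrix.of_apply]
      by_cases h1 : i = k
      · subst h1
        rw [if_pos rfl, if_pos rfl, if_pos h0, if_neg (by omega), one_mul, add_zero]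
      · have hk1 : 1 ≤ k.1 := by
          rcases Nat.eq_zero_or_pos k.1 with hz | hz
          · exact absurd (Fin.ext (by omega)) h1
          · omega
        rw [if_neg h1, if_pos (⟨h0, hk1⟩ : i.1 = 0 ∧ 1 ≤ k.1),
          if_neg (fun e : k = i => h1 e.symm), if_neg (by omega : ¬ k.1 = 0), zero_add]
        by_cases h2 : k.1 = j.1 + 1
        · rw [if_pos h2, if_pos h2, h2, Nat.succ_sub_one, neg_mul,
            div_mul_cancel₀ _ (hh_ne_zero j.1)]
        · rw [if_neg h2, if_neg h2, mul_zero]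
    rw [Finset.sum_congr rfl fun k _ => expand k, Finset.sum_add_distrib,
      Finset.sum_ite_eq' Finset.univ i (fun _ => al j.1), if_pos (Finset.mem_univ i)]
    by_cases hj : j.1 = n
    · rw [sum_single_val_none (fun _ => -(al j.1)) (j.1+1) (by omega), add_zero]
      have hjl : j = Fin.last n := Fin.ext (by simpa using hj)
      have hsig : (finRotate (n+1))⁻¹ i = j := by
        have : finRotate (n+1) j = i := by
          rw [hjl, finRotate_succ_apply, Fin.last_add_one]
          exact (Fin.ext (by simpa using h0.symm))
        rw [← this, Equiv.Perm.inv_def, Equiv.symm_apply_apply]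
      rw [hsig, Dmat, Matrix.diagonal_apply_eq, if_pos hj, hj]
    · rw [sum_single_val (fun _ => -(al j.1)) (j.1+1) (by omega)]
      have hsig : (finRotate (n+1))⁻¹ i ≠ j := by
        intro e
        have he : finRotate (n+1) j = i := by rw [← e, Equiv.Perm.inv_def, Equiv.apply_symm_apply]
        rw [finRotate_succ_apply] at he
        have hv := congrArg Fin.val he
        rw [Fin.val_add_one] at hv
        by_cases hl : j = Fin.last n
        · exact hj (by simpa using congrArg Fin.val hl)
        · rw [if_neg hl] at hv; omega
      rw [Dmat, Matrix.diagonal_apply_ne _ hsig]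
      ring
  · -- rows ≥ 1
    rw [E3_mul_pos n _ i j (by omega)]
    obtain ⟨t, ht⟩ : ∃ t, i.1 = t + 1 := ⟨i.1 - 1, by omega⟩
    by_cases hj : j.1 = t
    · have hjl : j ≠ Fin.last n := by
        intro e
        have := congrArg Fin.val e
        simp at this
        omega
      have hsig : (finRotate (n+1))⁻¹ i = j := by
        have : finRotate (n+1) j = i := by
          rw [finRotate_succ_apply]
          apply Fin.ext
          rw [Fin.val_add_one, if_neg hjl]
          omega
        rw [← this, Equiv.Perm.inv_def, Equiv.symm_apply_apply]
      rw [hsig, Dmat, Matrix.diagonal_apply_eq, if_neg (by omega : ¬ j.1 = n)]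
      simp only [Wmat, Matrix.of_apply, if_neg h0]
      rw [if_pos (by omega : i.1 = j.1 + 1), ht, Nat.succ_sub_one, hj]
    · have hsig : (finRotate (n+1))⁻¹ i ≠ j := by
        intro e
        have he : finRotate (n+1) j = i := by rw [← e, Equiv.Perm.inv_def, Equiv.apply_symm_apply]
        rw [finRotate_succ_apply] at he
        have hv := congrArg Fin.val he
        rw [Fin.val_add_one] at hv
        by_cases hl : j = Fin.last n
        · rw [if_pos hl] at hv; omega
        · rw [if_neg hl] at hv; omega
      rw [Dmat, Matrix.diagonal_apply_ne _ hsig]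
      simp only [Wmat, Matrix.of_apply, if_neg h0]
      rw [if_neg (by omega : ¬ i.1 = j.1 + 1)]

lemma E1_det (n : ℕ) : (E1mat n).det = 1 := by
  have ht : (E1mat n).BlockTriangular OrderDual.toDual := by
    intro i j h
    simp only [E1mat, Matrix.of_apply]
    rw [if_neg (by intro e; rw [e] at h; exact lt_irrefl _ h), if_neg (by
      have : (i:ℕ) < (j:ℕ) := h
      omega)]
  rw [Matrix.det_of_lowerTriangular _ ht]
  rw [Finset.prod_congr rfl fun i _ => (by simp [E1mat] : E1mat n i i = 1)]
  exact Finset.prod_const_one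

lemma E2_det (n : ℕ) : (E2mat n).det = 1 := by
  have ht : (E2mat n).BlockTriangular OrderDual.toDual := by
    intro i j h
    simp only [E2mat, Matrix.of_apply]
    rw [if_neg (by intro e; rw [e] at h; exact lt_irrefl _ h), if_neg (by
      have : (i:ℕ) < (j:ℕ) := h
      omega)]
  rw [Matrix.det_of_lowerTriangular _ ht]
  rw [Finset.prod_congr rfl fun i _ => (by simp [E2mat] : E2mat n i i = 1)]
  exact Finset.prod_const_one

lemma E3_det (n : ℕ) : (E3mat n).det = 1 := by
  have ht : (E3mat n).BlockTriangular id := by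
    intro i j h
    have hji : (j:ℕ) < (i:ℕ) := h
    simp only [E3mat, Matrix.of_apply]
    rw [if_neg (by intro e; rw [e] at hji; exact lt_irrefl _ hji), if_neg (by omega)]
  rw [Matrix.det_of_upperTriangular ht]
  rw [Finset.prod_congr rfl fun i _ => (by simp [E3mat] : E3mat n i i = 1)]
  exact Finset.prod_const_one

lemma det_step {N : Type*} [Fintype N] [DecidableEq N] (E M F : Matrix N N ℚ)
    (hE : E.det = 1) (h : E * M = F) : M.det = F.det := by
  rw [← h, Matrix.det_mul, hE, one_mul]

lemma detB (n : ℕ) : (Matrix.of fun i j : Fin (n+1) => bseq (i.1 + j.1)).det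
    = (-1:ℚ)^n * al n * ∏ k ∈ Finset.range n, hh k := by
  have h1 : (Matrix.of fun i j : Fin (n+1) => bseq (i.1 + j.1)).det = (Gmat n).det := by
    rw [← conjB n, Matrix.det_mul, Matrix.det_mul, Matrix.det_transpose, Amat_det]
    ring
  rw [h1, det_step _ _ _ (E1_det n) (E1G n), det_step _ _ _ (E2_det n) (E2F n),
    det_step _ _ _ (E3_det n) (E3W n)]
  rw [Matrix.det_permute]
  have hD : (Dmat n).det = al n * ∏ k ∈ Finset.range n, hh k := by
    rw [Dmat, Matrix.det_diagonal, Fin.prod_univ_castSucc]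
    have hlast : (if (Fin.last n).1 = n then al n else hh (Fin.last n).1) = al n := by
      simp
    rw [hlast]
    have hcast : ∀ i : Fin n, (if (Fin.castSucc i).1 = n then al n else hh (Fin.castSucc i).1)
        = hh i.1 := by
      intro i
      rw [if_neg (by rw [Fin.coe_castSucc]; exact Nat.ne_of_lt i.2), Fin.coe_castSucc]
    rw [Finset.prod_congr rfl fun i _ => hcast i, Fin.prod_univ_eq_prod_range]
    ring
  rw [hD]
  have hsign : ((Equiv.Perm.sign ((finRotate (n+1))⁻¹ : Equiv.Perm (Fin (n+1)))) : ℚ)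
      = (-1:ℚ)^n := by
    rw [Equiv.Perm.sign_inv, sign_finRotate]
    push_cast
    ring
  rw [hsign]
  ring

lemma detM (n : ℕ) : (Matrix.of fun i j : Fin (n+1) => mm (i.1 + j.1)).det
    = ∏ k ∈ Finset.range (n+1), hh k := by
  have h1 : (Matrix.of fun i j : Fin (n+1) => mm (i.1 + j.1)).det
      = (Matrix.diagonal (fun i : Fin (n+1) => hh i.1)).det := by
    rw [← conjM n, Matrix.det_mul, Matrix.det_mul, Matrix.det_transpose, Amat_det]
    ring
  rw [h1, Matrix.det_diagonal, Fin.prod_univ_eq_prod_range]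

lemma final_scalar (m : ℕ) :
    (-1:ℚ)^(m+1) * al (m+1)
      = (-1:ℚ)^m * (2^(m+2) / (((m+1).factorial : ℕ) : ℚ)) * As (m+1) * hh (m+1) := by
  have hf : (((m+1).factorial : ℕ) : ℚ) ≠ 0 := Nat.cast_ne_zero.mpr (Nat.factorial_ne_zero _)
  have h1 : ((-1:ℚ))^m * (-1)^m = 1 := neg_one_pow_mul_self m
  simp only [al, hh, gam, pow_succ]
  have e2 : ((-1:ℚ))^(m*2) = 1 := by rw [mul_comm m 2, pow_mul]; norm_num
  have e4 : ((-1:ℚ))^(m*4) = 1 := by rw [mul_comm m 4, pow_mul]; norm_num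
  field_simp
  ring_nf
  linear_combination As (1+m) * e2

theorem hankel_shifted_eulerEval_one (n : ℕ) (hn : 1 ≤ n) :
    hankel (fun k => if k = 0 then 0 else eulerEval 1 (k - 1)) n
      = (-1) ^ (n - 1) * (2 ^ (n + 1) / (n.factorial : ℚ))
        * (∑ j ∈ Finset.range n, (-1) ^ j / ((j : ℚ) + 1))
        * hankel (fun k => eulerEval 1 k) n := by
  have e1 : hankel (fun k => if k = 0 then 0 else eulerEval 1 (k - 1)) n
      = (Matrix.of fun i j : Fin (n+1) => bseq (i.1 + j.1)).det := rfl
  have e2 : hankel (fun k => eulerEval 1 k) n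
      = (Matrix.of fun i j : Fin (n+1) => mm (i.1 + j.1)).det := rfl
  rw [e1, e2, detB n, detM n]
  obtain ⟨m, rfl⟩ : ∃ m, n = m + 1 := ⟨n - 1, by omega⟩
  rw [Finset.prod_range_succ hh (m+1)]
  have hAs : (∑ j ∈ Finset.range (m+1), (-1:ℚ) ^ j / ((j : ℚ) + 1)) = As (m+1) := rfl
  rw [hAs, show (m + 1) - 1 = m from rfl]
  have key := final_scalar m
  linear_combination (∏ k ∈ Finset.range (m+1), hh k) * key
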